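/- Let φ be a pure square automorphism of A(Γ) and let (s₀, s₁, ..., sₙ, s₀) be a directed cycle in the automorphism diagram D_φ. If some adjacent pair s_i, s_{i+1} on the cycle commutes in A(Γ), then {s₀, ..., sₙ} spans a complete subgraph of Γ. -/

import Mathlib

open Filter Matrix

/-- Relators of the right-angled Artin group of the graph with vertex set `V`
and adjacency relation `E`. -/
def raagRels (V : Type) (E : V → V → Prop) : Set (FreeGroup V) :=
  {r | ∃ v w : V, E v w ∧
    r = FreeGroup.of v * FreeGroup.of w * (FreeGroup.of v)⁻¹ * (FreeGroup.of w)⁻¹}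

/-- The right-angled Artin group `A(Γ)` of the graph `Γ = (V, E)`. -/
abbrev RAAG (V : Type) (E : V → V → Prop) := PresentedGroup (raagRels V E)

/-- The generator of `A(Γ)` corresponding to the vertex `v`. -/
def raagGen {V : Type} (E : V → V → Prop) (v : V) : RAAG V E := PresentedGroup.of v

/-- The support of `g ∈ A(Γ)`: the smallest set of vertices `T` such that `g` lies in the
special subgroup generated by `T` (this is the set of generators appearing in a reduced
spelling of `g`). -/
def supp {V : Type} {E : V → V → Prop} (g : RAAG V E) : Set V :=
  {v | ∀ T : Set V, g ∈ Subgroup.closure (raagGen E '' T) → v ∈ T}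

/-- Word length of `g` with respect to a generating set `S` (and inverses). -/
noncomputable def wlen {G : Type*} [Group G] (S : Set G) (g : G) : ℕ :=
  sInf {n | ∃ l : List G, (∀ x ∈ l, x ∈ S ∨ x⁻¹ ∈ S) ∧ l.prod = g ∧ l.length = n}

/-- The dilatation of `φ` at `w`: `lim_k log|φ^k(w)| / k` (expressed via `limsup`,
which agrees with the limit whenever the limit exists). -/
noncomputable def dilAt {G : Type*} [Group G] (S : Set G) (φ : MulAut G) (w : G) : ℝ :=
  Filter.limsup (fun k : ℕ => Real.log (wlen S ((φ ^ k) w)) / k) Filter.atTop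

/-- `φ` is pure: `s ∈ supp (φ s)` for every generator `s`. -/
def IsPure {V : Type} {E : V → V → Prop} (φ : MulAut (RAAG V E)) : Prop :=
  ∀ s : V, s ∈ supp (φ (raagGen E s))

/-- `φ` is a square map: images of distinct commuting generators have pairwise commuting
supports. -/
def IsSquareMap {V : Type} {E : V → V → Prop} (φ : MulAut (RAAG V E)) : Prop :=
  ∀ s₁ s₂ : V, s₁ ≠ s₂ → Commute (raagGen E s₁) (raagGen E s₂) →
    ∀ u ∈ supp (φ (raagGen E s₁)), ∀ v ∈ supp (φ (raagGen E s₂)),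
      Commute (raagGen E u) (raagGen E v)

/-- The edge relation of the automorphism diagram `D_φ`: a directed edge `s → t`
iff `t ≠ s` and `t ∈ supp (φ s)`. -/
def DEdge {V : Type} {E : V → V → Prop} (φ : MulAut (RAAG V E)) (s t : V) : Prop :=
  t ≠ s ∧ t ∈ supp (φ (raagGen E s))

/-- A directed graph has no directed cycles (cycles may repeat vertices). -/
def NoCycles {V : Type} (D : V → V → Prop) : Prop :=
  ¬ ∃ (n : ℕ) (p : Fin (n + 1) → V),
    (∀ i : Fin n, D (p i.castSucc) (p i.succ)) ∧ D (p (Fin.last n)) (p 0)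

/-- `Wset D i = T₀ ∪ ⋯ ∪ T_i`, the union of the first `i+1` strata of the terminal
partition: `Wset D 0` is the set of terminal vertices, and `v ∈ Wset D (n+1)` iff all
out-neighbours of `v` lie in `Wset D n`. The stratum `T_{n+1}` is
`Wset D (n+1) \ Wset D n`. -/
def Wset {V : Type} (D : V → V → Prop) : ℕ → Set V
  | 0 => {v | ∀ w, ¬ D v w}
  | n + 1 => {v | ∀ w, D v w → w ∈ Wset D n}


/-- Key induction along an infinite directed walk in `D_φ` whose first two vertices
commute: all vertices on the walk pairwise commute. -/
lemma walk_commute_key {V : Type} {E : V → V → Prop} (φ : MulAut (RAAG V E))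
    (hpure : IsPure φ) (hsq : IsSquareMap φ) (q : ℕ → V)
    (hedge : ∀ i, DEdge φ (q i) (q (i + 1)))
    (hc : Commute (raagGen E (q 0)) (raagGen E (q 1))) :
    ∀ k, ∀ i ≤ k, ∀ j ≤ k, Commute (raagGen E (q i)) (raagGen E (q j)) := by
  intro k
  induction k with
  | zero =>
    intro i hi j hj
    interval_cases i; interval_cases j
    exact Commute.refl _
  | succ k ih =>
    have step : ∀ i ≤ k, Commute (raagGen E (q i)) (raagGen E (q (k + 1))) := by
      intro i hi
      match k, hi with
      | 0, hi =>
        interval_cases i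
        exact hc
      | (k' + 1), hi =>
        by_cases hne : q i = q (k' + 1)
        · have h1 : q (k' + 1) ≠ q k' := (hedge k').1
          have h2 : Commute (raagGen E (q (k' + 1))) (raagGen E (q k')) :=
            ih (k' + 1) le_rfl k' (Nat.le_succ _)
          have := hsq (q (k' + 1)) (q k') h1 h2 (q (k' + 2)) (hedge (k' + 1)).2 (q i)
            (by rw [hne]; exact (hedge k').2)
          exact this.symm
        · exact hsq (q i) (q (k' + 1)) hne (ih i hi (k' + 1) le_rfl)
            (q i) (hpure (q i)) (q (k' + 2)) (hedge (k' + 1)).2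
    intro i hi j hj
    rcases Nat.lt_succ_iff_lt_or_eq.mp (Nat.lt_succ_of_le hi) with hi' | rfl
    · rcases Nat.lt_succ_iff_lt_or_eq.mp (Nat.lt_succ_of_le hj) with hj' | rfl
      · exact ih i (Nat.lt_succ_iff.mp hi') j (Nat.lt_succ_iff.mp hj')
      · exact step i (Nat.lt_succ_iff.mp hi')
    · rcases Nat.lt_succ_iff_lt_or_eq.mp (Nat.lt_succ_of_le hj) with hj' | rfl
      · exact (step j (Nat.lt_succ_iff.mp hj')).symm
      · exact Commute.refl _

theorem cycle_adjacent_commute_complete {V : Type} [Fintype V] {E : V → V → Prop}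
    (φ : MulAut (RAAG V E)) (hpure : IsPure φ) (hsq : IsSquareMap φ)
    (n : ℕ) (p : Fin (n + 1) → V)
    (hpath : ∀ i : Fin n, DEdge φ (p i.castSucc) (p i.succ))
    (hcyc : DEdge φ (p (Fin.last n)) (p 0))
    (hadj : (∃ i : Fin n, Commute (raagGen E (p i.castSucc)) (raagGen E (p i.succ))) ∨
      Commute (raagGen E (p (Fin.last n))) (raagGen E (p 0))) :
    ∀ i j : Fin (n + 1), Commute (raagGen E (p i)) (raagGen E (p j)) := by
  -- The cyclic edge relation on `Fin (n+1)`.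
  have edgeAll : ∀ a : Fin (n + 1), DEdge φ (p a) (p (a + 1)) := by
    intro a
    rcases lt_or_eq_of_le (Nat.lt_succ_iff.mp a.isLt) with h | h
    · have h1 : (⟨a.val, h⟩ : Fin n).castSucc = a := by ext; simp
      have h2 : (⟨a.val, h⟩ : Fin n).succ = a + 1 := by
        ext
        rw [Fin.val_add_one_of_lt]
        · simp
        · exact Fin.lt_last_iff_ne_last.mpr (by
            intro hh
            rw [hh] at h
            simp [Fin.last] at h)
      have := hpath ⟨a.val, h⟩
      rwa [h1, h2] at this
    · have h1 : a = Fin.last n := by ext; simpa using h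
      rw [h1, Fin.last_add_one]
      exact hcyc
  -- Rotate the cycle so it starts at the commuting pair.
  obtain ⟨m, hm⟩ : ∃ m : Fin (n + 1),
      Commute (raagGen E (p m)) (raagGen E (p (m + 1))) := by
    rcases hadj with ⟨i, hi⟩ | h
    · refine ⟨i.castSucc, ?_⟩
      have : i.castSucc + 1 = i.succ := by
        ext
        rw [Fin.val_add_one_of_lt (Fin.castSucc_lt_last i)]
        simp
      rw [this]
      exact hi
    · exact ⟨Fin.last n, by rw [Fin.last_add_one]; exact h⟩
  open Fin.NatCast in set q : ℕ → V := fun i => p (m + (i : Fin (n + 1))) with hq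
  have hedge : ∀ i, DEdge φ (q i) (q (i + 1)) := by
    intro i
    open Fin.NatCast in have : m + ((i : ℕ) + 1 : ℕ) = m + (i : Fin (n + 1)) + 1 := by push_cast; rw [add_assoc]
    simp only [hq, this]
    exact edgeAll _
  have hc : Commute (raagGen E (q 0)) (raagGen E (q 1)) := by
    simp only [hq, Fin.natCast_zero, Nat.cast_one, add_zero]
    exact hm
  have key := walk_commute_key φ hpure hsq q hedge hc
  intro i j
  have hqi : q ((i - m).val) = p i := by
    simp only [hq]
    rw [Fin.cast_val_eq_self, add_comm m (i - m), sub_add_cancel]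
  have hqj : q ((j - m).val) = p j := by
    simp only [hq]
    rw [Fin.cast_val_eq_self, add_comm m (j - m), sub_add_cancel]
  have := key n ((i - m).val) (Fin.is_le _) ((j - m).val) (Fin.is_le _)
  rwa [hqi, hqj] at this
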